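/- The minimum of the Kullback–Leibler divergence Σ_{m=1}^{N^K} p_m log(N^K p_m) over all feasible distributions p for the symmetric TSC scheme equals (1−(N−1)(D−1))·log((1−(N−1)(D−1))/N) + (N−1)(D−1)·log((N−1)(D−1)/(N^K−N)) + K·log N (with the convention 0·log 0 = 0), and this minimum is attained by p*. -/

import Mathlib

open Finset Real

/-- Download cost of option `m` (0-indexed: options `1,…,N` of the paper are `m < N`)
in the symmetric TSC scheme with `N` databases and `K` messages. -/
noncomputable def tscCost (N m : ℕ) : ℝ := if m < N then (N : ℝ) - 1 else (N : ℝ)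

/-- `p` is a feasible query distribution for the symmetric TSC scheme with expected
normalized download cost `D`. -/
def TSCFeasible (N K : ℕ) (D : ℝ) (p : ℕ → ℝ) : Prop :=
  (∀ m ∈ Finset.range (N ^ K), 0 ≤ p m) ∧
  (∑ m ∈ Finset.range (N ^ K), p m = 1) ∧
  (1 / ((N : ℝ) - 1)) * (∑ m ∈ Finset.range (N ^ K), p m * tscCost N m) = D

/-- The optimal distribution `p*` for the symmetric TSC scheme. -/
noncomputable def tscOpt (N K : ℕ) (D : ℝ) (m : ℕ) : ℝ :=
  if m < N then (1 - ((N : ℝ) - 1) * (D - 1)) / N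
  else ((N : ℝ) - 1) * (D - 1) / ((N : ℝ) ^ K - (N : ℝ))

/-- Download cost of option `m` (0-indexed) in the alternative PIR scheme with
message length `L`. -/
noncomputable def altCost (N L m : ℕ) : ℝ := if m < N then (L : ℝ) else (L : ℝ) + 1

/-- `p` is a feasible query distribution for the alternative PIR scheme
(`M = N (L+1)^(K-1)` options) with expected normalized download cost `D`. -/
def AltFeasible (N K L : ℕ) (D : ℝ) (p : ℕ → ℝ) : Prop :=
  (∀ m ∈ Finset.range (N * (L + 1) ^ (K - 1)), 0 ≤ p m) ∧
  (∑ m ∈ Finset.range (N * (L + 1) ^ (K - 1)), p m = 1) ∧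
  (1 / (L : ℝ)) * (∑ m ∈ Finset.range (N * (L + 1) ^ (K - 1)), p m * altCost N L m) = D

/-- The optimal distribution `q*` for the alternative PIR scheme. -/
noncomputable def altOpt (N K L : ℕ) (D : ℝ) (m : ℕ) : ℝ :=
  if m < N then (1 - (L : ℝ) * (D - 1)) / N
  else (L : ℝ) * (D - 1) / ((N : ℝ) * ((L : ℝ) + 1) ^ (K - 1) - (N : ℝ))

/-- Rényi divergence of order `α` (`0 < α`, `α ≠ 1`) of a distribution `p` on `M`
options from the uniform distribution on those options (natural logarithm). -/
noncomputable def renyiDiv (M : ℕ) (α : ℝ) (p : ℕ → ℝ) : ℝ :=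
  (1 / (α - 1)) * Real.log ((M : ℝ) ^ (α - 1) * ∑ m ∈ Finset.range M, p m ^ α)

/-- Kullback–Leibler divergence of a distribution `p` on `M` options from the uniform
distribution on those options (natural logarithm, with `0 · log 0 = 0`). -/
noncomputable def klDivUnif (M : ℕ) (p : ℕ → ℝ) : ℝ :=
  ∑ m ∈ Finset.range M, p m * Real.log ((M : ℝ) * p m)

/-- The maximum of `p` over the `M` options. -/
noncomputable def maxOver (M : ℕ) (hM : M ≠ 0) (p : ℕ → ℝ) : ℝ :=
  (Finset.range M).sup' (Finset.nonempty_range_iff.mpr hM) p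

lemma sum_mul_log_ge (s : Finset ℕ) (hs : s.Nonempty) (p : ℕ → ℝ)
    (hp : ∀ i ∈ s, 0 ≤ p i) :
    (∑ i ∈ s, p i) * Real.log ((∑ i ∈ s, p i) / s.card) ≤ ∑ i ∈ s, p i * Real.log (p i) := by
  have hn : (0:ℝ) < s.card := by exact_mod_cast Finset.card_pos.mpr hs
  have hw : ∑ i ∈ s, (s.card : ℝ)⁻¹ = 1 := by
    rw [Finset.sum_const, nsmul_eq_mul]; field_simp
  have := Real.convexOn_mul_log.map_sum_le (t := s) (w := fun _ => (s.card : ℝ)⁻¹)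
    (p := p) (fun i _ => by positivity) hw (fun i hi => hp i hi)
  simp only [smul_eq_mul] at this
  have h1 : ∑ i ∈ s, (s.card : ℝ)⁻¹ * p i = (∑ i ∈ s, p i) / s.card := by
    rw [← Finset.mul_sum]; ring
  rw [h1] at this
  have h2 := mul_le_mul_of_nonneg_left this (le_of_lt hn)
  rw [Finset.mul_sum] at h2
  calc (∑ i ∈ s, p i) * Real.log ((∑ i ∈ s, p i) / s.card)
      = (s.card : ℝ) * ((∑ i ∈ s, p i) / s.card * Real.log ((∑ i ∈ s, p i) / s.card)) := by
        field_simp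
    _ ≤ ∑ i ∈ s, p i * Real.log (p i) := by
        refine h2.trans_eq (Finset.sum_congr rfl fun i _ => ?_)
        field_simp

lemma geo_aux (N : ℕ) (hN : 2 ≤ N) :
    ∀ K : ℕ, ((N:ℝ)-1) * ∑ k ∈ Finset.range K, ((N:ℝ)^k)⁻¹ < N := by
  have hN1 : (1:ℝ) < N := by exact_mod_cast hN
  intro K; induction K with
  | zero => simp; linarith
  | succ n ih =>
    rw [Finset.sum_range_succ']
    have hstep : ∀ k : ℕ, ((N:ℝ)^(k+1))⁻¹ = ((N:ℝ))⁻¹ * ((N:ℝ)^k)⁻¹ := by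
      intro k; rw [pow_succ, mul_inv]; ring
    simp only [hstep, pow_zero, inv_one]
    rw [← Finset.mul_sum]
    have hNpos : (0:ℝ) < (N:ℝ)⁻¹ := by positivity
    have h2 : ((N:ℝ)-1) * (∑ k ∈ Finset.range n, ((N:ℝ)^k)⁻¹) * (N:ℝ)⁻¹
        < (N:ℝ) * (N:ℝ)⁻¹ := mul_lt_mul_of_pos_right ih hNpos
    have h3 : (N:ℝ) * (N:ℝ)⁻¹ = 1 := by field_simp
    nlinarith

/-- the minimum of the KL divergence `∑ pₘ log (N^K pₘ)` over feasible
distributions of the symmetric TSC scheme equals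
`(1-(N-1)(D-1)) log((1-(N-1)(D-1))/N) + (N-1)(D-1) log((N-1)(D-1)/(N^K-N)) + K log N`,
attained by `p*`. -/
theorem tsc_kl_tradeoff (N K : ℕ) (hN : 2 ≤ N) (hK : 2 ≤ K) (D : ℝ)
    (hD1 : 1 ≤ D) (hD2 : D ≤ ∑ k ∈ Finset.range K, ((N : ℝ) ^ k)⁻¹) :
    TSCFeasible N K D (tscOpt N K D) ∧
    (∀ p : ℕ → ℝ, TSCFeasible N K D p →
      (1 - ((N : ℝ) - 1) * (D - 1)) * Real.log ((1 - ((N : ℝ) - 1) * (D - 1)) / N) +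
        ((N : ℝ) - 1) * (D - 1) * Real.log (((N : ℝ) - 1) * (D - 1) / ((N : ℝ) ^ K - N)) +
        (K : ℝ) * Real.log N ≤ klDivUnif (N ^ K) p) ∧
    klDivUnif (N ^ K) (tscOpt N K D) =
      (1 - ((N : ℝ) - 1) * (D - 1)) * Real.log ((1 - ((N : ℝ) - 1) * (D - 1)) / N) +
        ((N : ℝ) - 1) * (D - 1) * Real.log (((N : ℝ) - 1) * (D - 1) / ((N : ℝ) ^ K - N)) +
        (K : ℝ) * Real.log N := by
  have hNr : (2:ℝ) ≤ (N:ℝ) := by exact_mod_cast hN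
  have hN1 : (1:ℝ) < (N:ℝ) := by linarith
  have hN0 : (0:ℝ) < (N:ℝ) := by linarith
  have hNK : N ≤ N ^ K := Nat.le_self_pow (by omega) N
  have hNKlt : N < N ^ K := by
    calc N = N ^ 1 := (pow_one N).symm
    _ < N ^ K := Nat.pow_lt_pow_right (by omega) (by omega)
  have hC : (0:ℝ) < (N:ℝ)^K - N := by
    have : (N:ℝ) < (N:ℝ)^K := by exact_mod_cast hNKlt
    linarith
  have hcastC : ((N ^ K - N : ℕ) : ℝ) = (N:ℝ)^K - N := by
    push_cast [Nat.cast_sub hNK]; ring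
  set B : ℝ := ((N:ℝ) - 1) * (D - 1) with hBdef
  set A : ℝ := 1 - B with hAdef
  have hB0 : 0 ≤ B := by
    apply mul_nonneg <;> linarith
  have hB1 : B < 1 := by
    have hgeo := geo_aux N hN K
    have hle : B ≤ ((N:ℝ)-1) * ((∑ k ∈ Finset.range K, ((N:ℝ)^k)⁻¹) - 1) := by
      rw [hBdef]
      apply mul_le_mul_of_nonneg_left (by linarith) (by linarith)
    nlinarith
  have hA0 : 0 < A := by rw [hAdef]; linarith
  -- split lemma
  have hsplit : ∀ f : ℕ → ℝ, ∑ m ∈ Finset.range (N^K), f m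
      = ∑ m ∈ Finset.range N, f m + ∑ m ∈ Finset.Ico N (N^K), f m := by
    intro f
    rw [Finset.range_eq_Ico, ← Finset.sum_Ico_consecutive _ (Nat.zero_le N) hNK,
      ← Finset.range_eq_Ico]
  have hcardIco : (Finset.Ico N (N^K)).card = N^K - N := Nat.card_Ico _ _
  have hIcoNe : (Finset.Ico N (N^K)).Nonempty := by
    rw [Finset.nonempty_Ico]; exact hNKlt
  have hrangeNe : (Finset.range N).Nonempty := Finset.nonempty_range_iff.mpr (by omega)
  -- group sums of a feasible p
  have hgroup : ∀ p : ℕ → ℝ, TSCFeasible N K D p →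
      (∑ m ∈ Finset.range N, p m = A) ∧ (∑ m ∈ Finset.Ico N (N^K), p m = B) := by
    intro p ⟨hp0, hp1, hpD⟩
    rw [hsplit] at hp1
    have hcost : ∑ m ∈ Finset.range (N^K), p m * tscCost N m
        = (∑ m ∈ Finset.range N, p m) * ((N:ℝ)-1)
          + (∑ m ∈ Finset.Ico N (N^K), p m) * (N:ℝ) := by
      rw [hsplit, Finset.sum_mul, Finset.sum_mul]
      congr 1
      · exact Finset.sum_congr rfl fun m hm => by
          rw [tscCost, if_pos (Finset.mem_range.mp hm)]
      · exact Finset.sum_congr rfl fun m hm => by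
          rw [tscCost, if_neg (by have := (Finset.mem_Ico.mp hm).1; omega)]
    rw [hcost] at hpD
    have hN1' : (N:ℝ) - 1 ≠ 0 := by linarith
    have hpD' : (∑ m ∈ Finset.range N, p m) * ((N:ℝ)-1)
          + (∑ m ∈ Finset.Ico N (N^K), p m) * (N:ℝ) = ((N:ℝ)-1) * D := by
      field_simp at hpD
      linarith
    constructor
    · rw [hAdef, hBdef]; linear_combination (N:ℝ) * hp1 - hpD'
    · rw [hBdef]; linear_combination hpD' - ((N:ℝ)-1) * hp1
  -- KL decomposition
  have hkl : ∀ p : ℕ → ℝ, (∀ m ∈ Finset.range (N^K), 0 ≤ p m) →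
      (∑ m ∈ Finset.range (N^K), p m = 1) →
      klDivUnif (N^K) p = (K:ℝ) * Real.log N + ∑ m ∈ Finset.range (N^K), p m * Real.log (p m) := by
    intro p hp0 hp1
    have hlogM : Real.log ((N^K : ℕ) : ℝ) = (K:ℝ) * Real.log N := by
      push_cast; rw [Real.log_pow]
    have : ∀ m ∈ Finset.range (N^K), p m * Real.log (((N^K : ℕ):ℝ) * p m)
        = p m * Real.log (((N^K:ℕ)):ℝ) + p m * Real.log (p m) := by
      intro m hm
      rcases eq_or_lt_of_le (hp0 m hm) with h | h
      · rw [← h]; simp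
      · rw [Real.log_mul (by positivity) (ne_of_gt h)]; ring
    rw [klDivUnif, Finset.sum_congr rfl this, Finset.sum_add_distrib, ← Finset.sum_mul, hp1,
      one_mul, hlogM]
  refine ⟨?_, ?_, ?_⟩
  · -- feasibility of tscOpt
    have hval1 : ∀ m ∈ Finset.range N, tscOpt N K D m = A / N := by
      intro m hm; rw [tscOpt, if_pos (Finset.mem_range.mp hm), hAdef, hBdef]
    have hval2 : ∀ m ∈ Finset.Ico N (N^K), tscOpt N K D m = B / ((N:ℝ)^K - N) := by
      intro m hm
      rw [tscOpt, if_neg (by have := (Finset.mem_Ico.mp hm).1; omega), hBdef]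
    refine ⟨?_, ?_, ?_⟩
    · intro m _
      rw [tscOpt]
      split
      · have : 0 ≤ (1 - ((N:ℝ)-1)*(D-1)) := by rw [hAdef, hBdef] at hA0; linarith
        positivity
      · rw [hBdef] at hB0; positivity
    · rw [hsplit, Finset.sum_congr rfl hval1, Finset.sum_congr rfl hval2,
        Finset.sum_const, Finset.sum_const, hcardIco, Finset.card_range,
        nsmul_eq_mul, nsmul_eq_mul, hcastC]
      field_simp
      rw [hAdef]; ring
    · rw [hsplit]
      have e1 : ∑ m ∈ Finset.range N, tscOpt N K D m * tscCost N m
          = (N:ℝ) * (A / N * ((N:ℝ)-1)) := by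
        rw [← Finset.sum_congr rfl (fun m hm => by
          rw [hval1 m hm, tscCost, if_pos (Finset.mem_range.mp hm)]),
          Finset.sum_const, Finset.card_range, nsmul_eq_mul]
      have e2 : ∑ m ∈ Finset.Ico N (N^K), tscOpt N K D m * tscCost N m
          = ((N:ℝ)^K - N) * (B / ((N:ℝ)^K - N) * (N:ℝ)) := by
        rw [← Finset.sum_congr rfl (fun m hm => by
          rw [hval2 m hm, tscCost, if_neg (by have := (Finset.mem_Ico.mp hm).1; omega)]),
          Finset.sum_const, hcardIco, nsmul_eq_mul, hcastC]
      rw [e1, e2]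
      have hA' : (N:ℝ) * (A / N * ((N:ℝ)-1)) = A * ((N:ℝ)-1) := by field_simp
      have hB' : ((N:ℝ)^K - N) * (B / ((N:ℝ)^K - N) * (N:ℝ)) = B * (N:ℝ) := by
        field_simp
      rw [hA', hB', hAdef, hBdef]
      have hN1' : (N:ℝ) - 1 ≠ 0 := by linarith
      field_simp
      ring
  · -- lower bound
    intro p hfeas
    obtain ⟨hs1, hs2⟩ := hgroup p hfeas
    obtain ⟨hp0, hp1, _⟩ := hfeas
    rw [hkl p hp0 hp1, hsplit (fun m => p m * Real.log (p m))]
    have hb1 := sum_mul_log_ge (Finset.range N) hrangeNe p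
      (fun i hi => hp0 i (Finset.mem_range.mpr (lt_of_lt_of_le (Finset.mem_range.mp hi) hNK)))
    rw [hs1, Finset.card_range] at hb1
    have hb2 := sum_mul_log_ge (Finset.Ico N (N^K)) hIcoNe p
      (fun i hi => hp0 i (Finset.mem_range.mpr (Finset.mem_Ico.mp hi).2))
    rw [hs2, hcardIco, hcastC] at hb2
    linarith
  · -- value at optimum
    have hval1 : ∀ m ∈ Finset.range N, tscOpt N K D m = A / N := by
      intro m hm; rw [tscOpt, if_pos (Finset.mem_range.mp hm), hAdef, hBdef]
    have hval2 : ∀ m ∈ Finset.Ico N (N^K), tscOpt N K D m = B / ((N:ℝ)^K - N) := by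
      intro m hm
      rw [tscOpt, if_neg (by have := (Finset.mem_Ico.mp hm).1; omega), hBdef]
    have hM : ((N^K : ℕ):ℝ) = (N:ℝ)^K := by push_cast; rfl
    rw [klDivUnif, hsplit]
    have e1 : ∑ m ∈ Finset.range N, tscOpt N K D m * Real.log (((N^K : ℕ):ℝ) * tscOpt N K D m)
        = (N:ℝ) * (A / N * Real.log ((N:ℝ)^K * (A / N))) := by
      rw [← Finset.sum_congr rfl (fun m hm => by rw [hval1 m hm, hM]),
        Finset.sum_const, Finset.card_range, nsmul_eq_mul]
    have e2 : ∑ m ∈ Finset.Ico N (N^K),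
          tscOpt N K D m * Real.log (((N^K : ℕ):ℝ) * tscOpt N K D m)
        = ((N:ℝ)^K - N) * (B / ((N:ℝ)^K - N)
            * Real.log ((N:ℝ)^K * (B / ((N:ℝ)^K - N)))) := by
      rw [← Finset.sum_congr rfl (fun m hm => by rw [hval2 m hm, hM]),
        Finset.sum_const, hcardIco, nsmul_eq_mul, hcastC]
    have t1 : (N:ℝ) * (A / N * Real.log ((N:ℝ)^K * (A / N)))
        = A * Real.log (A / N) + A * ((K:ℝ) * Real.log N) := by
      have hAN : (0:ℝ) < A / N := by positivity
      rw [show (N:ℝ)^K * (A/N) = (A/N) * (N:ℝ)^K by ring,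
        Real.log_mul (ne_of_gt hAN) (by positivity), Real.log_pow]
      field_simp
    have t2 : ((N:ℝ)^K - N) * (B / ((N:ℝ)^K - N)
          * Real.log ((N:ℝ)^K * (B / ((N:ℝ)^K - N))))
        = B * Real.log (B / ((N:ℝ)^K - N)) + B * ((K:ℝ) * Real.log N) := by
      rcases eq_or_lt_of_le hB0 with h | h
      · rw [← h]; simp
      · have hBC : (0:ℝ) < B / ((N:ℝ)^K - N) := by positivity
        rw [show (N:ℝ)^K * (B / ((N:ℝ)^K - N)) = (B / ((N:ℝ)^K - N)) * (N:ℝ)^K by ring,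
          Real.log_mul (ne_of_gt hBC) (by positivity), Real.log_pow]
        field_simp
    rw [e1, e2, t1, t2, hAdef]; ring
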